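/- If x, y, z are nonzero integers with gcd(x,y,z) = 1 and x² + y² = z³, then there exist integers u, v with gcd(u,v) = 1 and uv ≠ 0 such that x = u(u² − 3v²), y = v(3u² − v²) and z = u² + v². -/

import Mathlib

open Zsqrtd

lemma gaussian_unit_is_cube (u : GaussianInt) (hu : IsUnit u) :
    ∃ w : GaussianInt, w ^ 3 = u := by
  have hn : u.norm = 1 := (Zsqrtd.norm_eq_one_iff' (by norm_num) u).mpr hu
  have hn' : u.re * u.re + u.im * u.im = 1 := by
    simpa [Zsqrtd.norm] using hn
  have hre : -1 ≤ u.re ∧ u.re ≤ 1 := by constructor <;> nlinarith [mul_self_nonneg u.im]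
  have him : -1 ≤ u.im ∧ u.im ≤ 1 := by constructor <;> nlinarith [mul_self_nonneg u.re]
  have : (u.re = 1 ∧ u.im = 0) ∨ (u.re = -1 ∧ u.im = 0) ∨
      (u.re = 0 ∧ u.im = 1) ∨ (u.re = 0 ∧ u.im = -1) := by
    obtain ⟨h1, h2⟩ := hre; obtain ⟨h3, h4⟩ := him
    interval_cases hr : u.re <;> interval_cases hi : u.im <;> omega
  have hext : ∀ a b : GaussianInt, a.re = b.re → a.im = b.im → a = b := fun a b h1 h2 =>
    Zsqrtd.ext h1 h2
  rcases this with ⟨h1, h2⟩ | ⟨h1, h2⟩ | ⟨h1, h2⟩ | ⟨h1, h2⟩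
  · exact ⟨1, hext _ _ (by simp [pow_succ, Zsqrtd.re_mul, Zsqrtd.im_mul, h1, h2])
      (by simp [pow_succ, Zsqrtd.re_mul, Zsqrtd.im_mul, h1, h2])⟩
  · exact ⟨-1, hext _ _ (by simp [pow_succ, Zsqrtd.re_mul, Zsqrtd.im_mul, h1, h2])
      (by simp [pow_succ, Zsqrtd.re_mul, Zsqrtd.im_mul, h1, h2])⟩
  · exact ⟨⟨0, -1⟩, hext _ _ (by simp [pow_succ, Zsqrtd.re_mul, Zsqrtd.im_mul, h1, h2])
      (by simp [pow_succ, Zsqrtd.re_mul, Zsqrtd.im_mul, h1, h2])⟩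
  · exact ⟨⟨0, 1⟩, hext _ _ (by simp [pow_succ, Zsqrtd.re_mul, Zsqrtd.im_mul, h1, h2])
      (by simp [pow_succ, Zsqrtd.re_mul, Zsqrtd.im_mul, h1, h2])⟩

theorem parameterization_x_sq_add_y_sq_eq_z_cubed (x y z : ℤ)
    (hx : x ≠ 0) (hy : y ≠ 0) (hz : z ≠ 0)
    (hgcd : Int.gcd (Int.gcd x y) z = 1) (h : x ^ 2 + y ^ 2 = z ^ 3) :
    ∃ u v : ℤ, Int.gcd u v = 1 ∧ u * v ≠ 0 ∧
      x = u * (u ^ 2 - 3 * v ^ 2) ∧ y = v * (3 * u ^ 2 - v ^ 2) ∧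
      z = u ^ 2 + v ^ 2 := by
  -- step 1 : gcd x y = 1
  have hxy : Int.gcd x y = 1 := by
    by_contra hne
    obtain ⟨p, hp, hpd⟩ := Nat.exists_prime_and_dvd hne
    have hpx : (p : ℤ) ∣ x := dvd_trans (Int.natCast_dvd_natCast.mpr hpd) (Int.gcd_dvd_left _ _)
    have hpy : (p : ℤ) ∣ y := dvd_trans (Int.natCast_dvd_natCast.mpr hpd) (Int.gcd_dvd_right _ _)
    have hpz3 : (p : ℤ) ∣ z ^ 3 := by
      rw [← h]; exact dvd_add (Dvd.dvd.pow hpx two_ne_zero) (Dvd.dvd.pow hpy two_ne_zero)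
    have hpz : (p : ℤ) ∣ z := (Nat.prime_iff_prime_int.mp hp).dvd_of_dvd_pow hpz3
    have hdvd : (p : ℤ) ∣ (Int.gcd (Int.gcd x y) z : ℤ) :=
      Int.dvd_coe_gcd (Int.natCast_dvd_natCast.mpr hpd) hpz
    rw [hgcd] at hdvd
    have hd1 : (p : ℤ) ∣ (1 : ℤ) := by exact_mod_cast hdvd
    have := Int.le_of_dvd one_pos hd1
    exact absurd (by exact_mod_cast this) (not_le.mpr hp.one_lt)
  -- step 2 : z is odd
  have hzodd : Odd z := by
    rcases Int.even_or_odd z with hze | hzo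
    · exfalso
      obtain ⟨k, hk⟩ := hze
      rcases Int.even_or_odd x with hxe | hxo <;> rcases Int.even_or_odd y with hye | hyo
      · obtain ⟨a, ha⟩ := hxe; obtain ⟨b, hb⟩ := hye
        have h2d : (2 : ℤ) ∣ (Int.gcd x y : ℤ) :=
          Int.dvd_coe_gcd ⟨a, by linarith⟩ ⟨b, by linarith⟩
        rw [hxy] at h2d
        norm_num at h2d
      · obtain ⟨a, ha⟩ := hxe; obtain ⟨b, hb⟩ := hyo
        have hE : 2 * (2 * a ^ 2 + 2 * b ^ 2 + 2 * b) + 1 = 2 * (4 * k ^ 3) := by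
          rw [ha, hb, hk] at h; ring_nf at h ⊢; linarith
        omega
      · obtain ⟨a, ha⟩ := hxo; obtain ⟨b, hb⟩ := hye
        have hE : 2 * (2 * a ^ 2 + 2 * a + 2 * b ^ 2) + 1 = 2 * (4 * k ^ 3) := by
          rw [ha, hb, hk] at h; ring_nf at h ⊢; linarith
        omega
      · obtain ⟨a, ha⟩ := hxo; obtain ⟨b, hb⟩ := hyo
        have hE : 4 * (a ^ 2 + a + b ^ 2 + b) + 2 = 4 * (2 * k ^ 3) := by
          rw [ha, hb, hk] at h; ring_nf at h ⊢; linarith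
        omega
    · exact hzo
  -- Gaussian integers
  set α : GaussianInt := ⟨x, y⟩ with hα
  have hnormα : α.norm = z ^ 3 := by
    rw [Zsqrtd.norm_def]; simp [hα]; ring_nf; linarith [h]
  have hmul : α * star α = ((z : GaussianInt)) ^ 3 := by
    have h1 := Zsqrtd.norm_eq_mul_conj α
    rw [hnormα] at h1
    rw [← h1]; push_cast; ring
  -- coprimality of α and star α
  obtain ⟨a, b, hab⟩ := Int.isCoprime_iff_gcd_eq_one.mpr hxy
  have h2 : (⟨a, -b⟩ : GaussianInt) * α + (⟨a, b⟩ : GaussianInt) * star α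
      = ((2 : ℤ) : GaussianInt) := by
    apply Zsqrtd.ext <;>
      simp [Zsqrtd.re_mul, Zsqrtd.im_mul, hα] <;> ring_nf <;> linarith [hab]
  obtain ⟨k, hk⟩ := hzodd
  have cop2 : IsCoprime ((2 : ℤ) : GaussianInt) ((z : GaussianInt)) := by
    have : IsCoprime (2 : ℤ) z := ⟨-k, 1, by linarith⟩
    have := this.map (Int.castRingHom GaussianInt)
    simpa using this
  obtain ⟨e, f, hef⟩ := cop2.pow_right (n := 3)
  have cop : IsCoprime α (star α) := by
    refine ⟨e * ⟨a, -b⟩, e * ⟨a, b⟩ + f * α, ?_⟩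
    linear_combination e * h2 + f * hmul + hef
  obtain ⟨D, hD⟩ := exists_associated_pow_of_mul_eq_pow' cop hmul
  obtain ⟨ζ, hζ⟩ := hD
  obtain ⟨w, hw⟩ := gaussian_unit_is_cube (ζ : GaussianInt) ζ.isUnit
  set γ : GaussianInt := D * w with hγ
  have hγ3 : γ ^ 3 = α := by rw [hγ, mul_pow, hw, hζ]
  set u := γ.re with hu
  set v := γ.im with hv
  have hX : x = u * (u ^ 2 - 3 * v ^ 2) := by
    have hc := congrArg Zsqrtd.re hγ3
    have e1 : γ ^ 3 = γ * γ * γ := by ring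
    rw [e1] at hc
    simp [Zsqrtd.re_mul, Zsqrtd.im_mul, hα] at hc
    rw [← hc]; ring
  have hY : y = v * (3 * u ^ 2 - v ^ 2) := by
    have hc := congrArg Zsqrtd.im hγ3
    have e1 : γ ^ 3 = γ * γ * γ := by ring
    rw [e1] at hc
    simp [Zsqrtd.re_mul, Zsqrtd.im_mul, hα] at hc
    rw [← hc]; ring
  have hZ : z = u ^ 2 + v ^ 2 := by
    have hcube : z ^ 3 = (u ^ 2 + v ^ 2) ^ 3 := by
      rw [← h, hX, hY]; ring
    exact (Odd.strictMono_pow (R := ℤ) (⟨1, rfl⟩ : Odd 3)).injective hcube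
  refine ⟨u, v, ?_, ?_, hX, hY, hZ⟩
  · -- gcd u v = 1
    have hgu : ((Int.gcd u v : ℤ)) ∣ x := hX ▸ Dvd.dvd.mul_right (Int.gcd_dvd_left _ _) _
    have hgv : ((Int.gcd u v : ℤ)) ∣ y := hY ▸ Dvd.dvd.mul_right (Int.gcd_dvd_right _ _) _
    have hdvd : ((Int.gcd u v : ℤ)) ∣ (Int.gcd x y : ℤ) := Int.dvd_coe_gcd hgu hgv
    rw [hxy] at hdvd
    have h1 : ((Int.gcd u v : ℤ)) = 1 :=
      Int.eq_one_of_dvd_one (by positivity) (by exact_mod_cast hdvd)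
    exact_mod_cast h1
  · -- u * v ≠ 0
    intro h0
    rcases mul_eq_zero.mp h0 with h0 | h0
    · exact hx (by rw [hX, h0]; ring)
    · exact hy (by rw [hY, h0]; ring)
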